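/- Let 1 < p < ∞, let K be a nonnegative integrable function on the infinite torus T^∞ with ∫ K dm_∞ = 1, and suppose that the Fourier coefficients of K satisfy K̂(α) = K̂(−α) = 0 for every nonzero finitely supported multi-index α of nonnegative integers. Then inf_{q ∈ P₀} ∫_{T^∞} |1 − q|^p K dm_∞ = 1, where P₀ is the set of analytic polynomials in finitely many variables vanishing at 0. -/

import Mathlib

open MeasureTheory ENNReal

noncomputable instance : MeasurableSpace Circle := borel Circle

instance : BorelSpace Circle := ⟨rfl⟩

lemma circle_coe_continuous : Continuous (fun z : Circle => (z : ℂ)) :=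
  continuous_subtype_val

lemma coords_continuous : Continuous (fun w : ℕ → Circle => (fun n => (w n : ℂ))) :=
  continuous_pi fun n => circle_coe_continuous.comp (continuous_apply n)

/-- Any continuous function times an integrable function is integrable on the compact
space `ℕ → Circle`. -/
lemma integrable_cont_mul (μ : Measure (ℕ → Circle)) (K : (ℕ → Circle) → ℝ)
    (hKint : Integrable K μ) (g : (ℕ → Circle) → ℂ) (hg : Continuous g) :
    Integrable (fun w => g w * (K w : ℂ)) μ := by
  obtain ⟨C, hC⟩ := (isCompact_univ (X := ℕ → Circle)).exists_bound_of_continuousOn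
    hg.continuousOn
  exact (hKint.ofReal.bdd_mul hg.aestronglyMeasurable (c := C)
    (ae_of_all μ fun x => hC x (Set.mem_univ x)))

/-- Upper bound case of Szegő's problem: if the Fourier coefficients of `K` satisfy
`K̂(α) = K̂(−α) = 0` for all nonzero finitely supported multi-indices `α` of nonnegative
integers, then `S(K) = inf_{q ∈ P₀} ∫ |1 − q|^p K dm_∞ = 1`. -/
theorem szego_upper_bound
    (μ : Measure (ℕ → Circle)) [μ.IsHaarMeasure] [IsProbabilityMeasure μ]
    (K : (ℕ → Circle) → ℝ) (hK0 : ∀ w, 0 ≤ K w)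
    (hKint : Integrable K μ) (hK1 : ∫ w, K w ∂μ = 1) (p : ℝ) (hp : 1 < p)
    (hhat : ∀ α : ℕ →₀ ℕ, α ≠ 0 →
      (∫ w, (K w : ℂ) * ∏ n ∈ α.support, ((w n : ℂ) ^ (α n : ℤ)) ∂μ) = 0 ∧
      (∫ w, (K w : ℂ) * ∏ n ∈ α.support, ((w n : ℂ) ^ (-(α n : ℤ))) ∂μ) = 0) :
    sInf {t : ℝ | ∃ q : MvPolynomial ℕ ℂ, MvPolynomial.constantCoeff q = 0 ∧
        t = ∫ w, ‖1 - MvPolynomial.eval (fun n => (w n : ℂ)) q‖ ^ p * K w ∂μ}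
      = 1 := by
  have hp0 : (0 : ℝ) < p := lt_trans one_pos hp
  set S := {t : ℝ | ∃ q : MvPolynomial ℕ ℂ, MvPolynomial.constantCoeff q = 0 ∧
      t = ∫ w, ‖1 - MvPolynomial.eval (fun n => (w n : ℂ)) q‖ ^ p * K w ∂μ} with hS
  -- 1 ∈ S via q = 0
  have h1S : (1 : ℝ) ∈ S := by
    refine ⟨0, map_zero _, ?_⟩
    simp only [map_zero, sub_zero, map_one, norm_one, Real.one_rpow, one_mul]
    exact hK1.symm
  -- every element of S is ≥ 1
  have hlb : ∀ t ∈ S, 1 ≤ t := by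
    rintro t ⟨q, hq0, rfl⟩
    set f : (ℕ → Circle) → ℂ := fun w => MvPolynomial.eval (fun n => (w n : ℂ)) q with hf
    have hfc : Continuous f :=
      (MvPolynomial.continuous_eval (p := q)).comp coords_continuous
    -- ∫ f * K = 0
    have h0 : ∫ w, f w * (K w : ℂ) ∂μ = 0 := by
      have hfeq : ∀ w : ℕ → Circle, f w =
          ∑ d ∈ q.support, MvPolynomial.coeff d q *
            ∏ n ∈ d.support, ((w n : ℂ)) ^ (d n) := fun w => MvPolynomial.eval_eq _ q
      have hsum : ∫ w, f w * (K w : ℂ) ∂μ =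
          ∑ d ∈ q.support, ∫ w, (MvPolynomial.coeff d q *
            ∏ n ∈ d.support, ((w n : ℂ)) ^ (d n)) * (K w : ℂ) ∂μ := by
        rw [← integral_finset_sum]
        · congr 1; ext w
          rw [hfeq w, Finset.sum_mul]
        · intro d _
          exact integrable_cont_mul μ K hKint _
            ((continuous_const.mul (continuous_finset_prod _ fun n _ =>
              ((circle_coe_continuous.comp (continuous_apply n)).pow _))))
      rw [hsum]
      refine Finset.sum_eq_zero fun d hd => ?_
      have hd0 : d ≠ 0 := by
        intro h
        rw [h] at hd
        exact (MvPolynomial.mem_support_iff.mp hd) hq0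
      have hz := (hhat d hd0).1
      have heq : (fun w : ℕ → Circle => (MvPolynomial.coeff d q *
            ∏ n ∈ d.support, ((w n : ℂ)) ^ (d n)) * (K w : ℂ)) =
          (fun w : ℕ → Circle => MvPolynomial.coeff d q *
            ((K w : ℂ) * ∏ n ∈ d.support, ((w n : ℂ)) ^ ((d n : ℤ)))) := by
        ext w
        simp only [zpow_natCast]
        ring
      rw [heq, integral_const_mul, hz, mul_zero]
    -- hence ∫ (Re f) K = 0
    have hintfK : Integrable (fun w => f w * (K w : ℂ)) μ :=
      integrable_cont_mul μ K hKint f hfc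
    have hre : ∫ w, (f w).re * K w ∂μ = 0 := by
      have h := integral_re hintfK
      rw [h0] at h
      simp only [RCLike.re_to_complex, Complex.mul_re, Complex.ofReal_re,
        Complex.ofReal_im, mul_zero, sub_zero, Complex.zero_re] at h
      exact h
    -- pointwise bound
    have hpt : ∀ w, (1 - p * (f w).re) * K w ≤
        ‖1 - f w‖ ^ p * K w := by
      intro w
      refine mul_le_mul_of_nonneg_right ?_ (hK0 w)
      have h1 : 1 + p * (‖1 - f w‖ - 1) ≤
          (1 + (‖1 - f w‖ - 1)) ^ p :=
        one_add_mul_self_le_rpow_one_add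
          (by linarith [norm_nonneg (1 - f w)]) hp.le
      have h1' : 1 + p * (‖1 - f w‖ - 1) ≤ ‖1 - f w‖ ^ p := by
        rwa [add_sub_cancel] at h1
      have h2 : 1 - (f w).re ≤ ‖1 - f w‖ := by
        calc 1 - (f w).re = (1 - f w).re := by simp
        _ ≤ ‖1 - f w‖ := Complex.re_le_norm _
      nlinarith
    -- integrability of both sides
    have hIre : Integrable (fun w => (f w).re * K w) μ := by
      refine hintfK.re.congr (ae_of_all μ fun w => ?_)
      simp [Complex.mul_re]
    have hIr : Integrable (fun w => (1 - p * (f w).re) * K w) μ := by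
      have heq : (fun w => (1 - p * (f w).re) * K w)
          = fun w => K w - p * ((f w).re * K w) := by
        ext w; ring
      rw [heq]
      exact hKint.sub (hIre.const_mul p)
    have hIl : Integrable
        (fun w => ‖1 - f w‖ ^ p * K w) μ := by
      have hcont : Continuous (fun w => ((‖1 - f w‖ ^ p : ℝ) : ℂ)) := by
        refine Complex.continuous_ofReal.comp ?_
        exact ((continuous_const.sub hfc).norm).rpow_const
          (fun x => Or.inr hp0.le)
      refine (integrable_cont_mul μ K hKint _ hcont).re.congr (ae_of_all μ fun w => ?_)
      simp [Complex.mul_re]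
    -- conclude
    have hmono : ∫ w, (1 - p * (f w).re) * K w ∂μ ≤
        ∫ w, ‖1 - f w‖ ^ p * K w ∂μ :=
      integral_mono hIr hIl hpt
    have hval : ∫ w, (1 - p * (f w).re) * K w ∂μ = 1 := by
      have heq : (fun w => (1 - p * (f w).re) * K w)
          = fun w => K w - p * ((f w).re * K w) := by
        ext w; ring
      rw [heq, integral_sub hKint (hIre.const_mul p), integral_const_mul, hre,
        mul_zero, sub_zero, hK1]
    linarith
  refine le_antisymm ?_ (le_csInf ⟨1, h1S⟩ hlb)
  exact csInf_le ⟨1, hlb⟩ h1S
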